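/- For every integer n ≥ 4 and every field F of characteristic zero, the span a of e_1, …, e_{n−1} is an abelian ideal of n_{n,1}, and every abelian ideal of n_{n,1} is contained in a; hence a is the unique maximal abelian ideal of n_{n,1}. -/

import Mathlib

theorem mylie_sum {L : Type*} [LieRing L] (x : L) {ι : Type*} (s : Finset ι) (f : ι → L) :
    ⁅x, ∑ i ∈ s, f i⁆ = ∑ i ∈ s, ⁅x, f i⁆ := by
  classical
  induction s using Finset.induction with
  | empty => simp
  | insert _ _ h ih => simp [Finset.sum_insert h, lie_add, ih]

theorem mysum_lie {L : Type*} [LieRing L] (x : L) {ι : Type*} (s : Finset ι) (f : ι → L) :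
    ⁅∑ i ∈ s, f i, x⁆ = ∑ i ∈ s, ⁅f i, x⁆ := by
  classical
  induction s using Finset.induction with
  | empty => simp
  | insert _ _ h ih => simp [Finset.sum_insert h, add_lie, ih]



/-- The family `e 1, …, e n` is a basis of `L` realizing the Lie brackets of the
nilpotent Lie algebra `n_{n,1}`. -/
def IsNn1Basis (F : Type*) [Field F] (n : ℕ) {L : Type*} [LieRing L] [LieAlgebra F L]
    (e : ℕ → L) : Prop :=
  LinearIndependent F (fun i : Fin n => e (i.val + 1)) ∧
  Submodule.span F (Set.range (fun i : Fin n => e (i.val + 1))) = ⊤ ∧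
  (∀ j k : ℕ, 1 ≤ j → j ≤ n - 1 → 1 ≤ k → k ≤ n - 1 → ⁅e j, e k⁆ = 0) ∧
  ⁅e 1, e n⁆ = 0 ∧
  (∀ k : ℕ, 2 ≤ k → k ≤ n - 1 → ⁅e k, e n⁆ = e (k - 1))

/-- The span of `e 1, …, e (n-1)` is an abelian ideal of `n_{n,1}`
containing every abelian ideal; hence it is the unique maximal abelian ideal. -/
theorem nn1_unique_maximal_abelian_ideal
    (F : Type*) [Field F] [CharZero F] (n : ℕ) (hn : 4 ≤ n)
    (L : Type*) [LieRing L] [LieAlgebra F L] (e : ℕ → L)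
    (he : IsNn1Basis F n e) :
    ∃ A : LieIdeal F L,
      ((A : Submodule F L) = Submodule.span F (e '' Set.Icc 1 (n - 1))) ∧
      (∀ x ∈ A, ∀ y ∈ A, ⁅x, y⁆ = 0) ∧
      (∀ I : LieIdeal F L, (∀ x ∈ I, ∀ y ∈ I, ⁅x, y⁆ = 0) →
        (I : Submodule F L) ≤ (A : Submodule F L)) := by
  obtain ⟨hli, hspan, hab, h1n, hkn⟩ := he
  set S : Submodule F L := Submodule.span F (e '' Set.Icc 1 (n-1)) with hS
  have hgen : ∀ j, 1 ≤ j → j ≤ n - 1 → e j ∈ S :=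
    fun j h1 h2 => Submodule.subset_span ⟨j, ⟨h1, h2⟩, rfl⟩
  have hkey : ∀ i : Fin n, ∀ j, 1 ≤ j → j ≤ n - 1 → ⁅e (i.val + 1), e j⁆ ∈ S := by
    intro i j h1 h2
    rcases le_or_gt (i.val + 1) (n - 1) with hle | hlt
    · rw [hab _ _ (by omega) hle h1 h2]; exact S.zero_mem
    · have hi : i.val + 1 = n := by omega
      rw [hi]
      rcases eq_or_lt_of_le h1 with h1' | h1'
      · rw [← h1', ← lie_skew, h1n, neg_zero]; exact S.zero_mem
      · rw [← lie_skew, hkn j (by omega) h2]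
        exact S.neg_mem (hgen _ (by omega) (by omega))
  have hlie : ∀ (x m : L), m ∈ S → ⁅x, m⁆ ∈ S := by
    intro x m hm
    induction hm using Submodule.span_induction with
    | mem m hm =>
      obtain ⟨j, ⟨hj1, hj2⟩, rfl⟩ := hm
      have hx : x ∈ Submodule.span F (Set.range fun i : Fin n => e (i.val + 1)) :=
        hspan ▸ Submodule.mem_top
      induction hx using Submodule.span_induction with
      | mem y hy => obtain ⟨i, rfl⟩ := hy; exact hkey i j hj1 hj2
      | zero => rw [zero_lie]; exact S.zero_mem
      | add a b _ _ ha hb => rw [add_lie]; exact S.add_mem ha hb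
      | smul c a _ ha => rw [smul_lie]; exact S.smul_mem c ha
    | zero => rw [lie_zero]; exact S.zero_mem
    | add a b _ _ ha hb => rw [lie_add]; exact S.add_mem ha hb
    | smul c a _ ha => rw [lie_smul]; exact S.smul_mem c ha
  have habS : ∀ x ∈ S, ∀ y ∈ S, ⁅x, y⁆ = 0 := by
    intro x hx y hy
    induction hx using Submodule.span_induction with
    | mem a ha =>
      obtain ⟨j, ⟨hj1, hj2⟩, rfl⟩ := ha
      induction hy using Submodule.span_induction with
      | mem b hb => obtain ⟨k, ⟨hk1, hk2⟩, rfl⟩ := hb; exact hab j k hj1 hj2 hk1 hk2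
      | zero => simp
      | add a b _ _ ha hb => rw [lie_add, ha, hb, add_zero]
      | smul c a _ ha => rw [lie_smul, ha, smul_zero]
    | zero => simp
    | add a b _ _ ha hb => rw [add_lie, ha, hb, add_zero]
    | smul c a _ ha => rw [smul_lie, ha, smul_zero]
  refine ⟨⟨S, fun {x m} hm => hlie x m hm⟩, rfl, fun x hx y hy => habS x hx y hy, ?_⟩
  intro I hI x hx
  -- show x ∈ S
  let b : Module.Basis (Fin n) F L := Module.Basis.mk hli hspan.ge
  set r := b.repr x with hr
  set i0 : Fin n := ⟨n - 1, by omega⟩ with hi0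
  set c := r i0 with hc
  have hxsum : ∑ i, r i • e (i.val + 1) = x := by
    rw [hr]; simpa only [b, Module.Basis.mk_apply] using b.sum_repr x
  have hne3 : e (n - 3) ≠ 0 := by
    have := hli.ne_zero ⟨n - 4, by omega⟩
    simpa [show n - 4 + 1 = n - 3 by omega] using this
  have hz : ⁅e (n - 1), x⁆ = c • e (n - 2) := by
    rw [← hxsum, mylie_sum, Finset.sum_eq_single i0]
    · rw [lie_smul]
      congr 1
      have : i0.val + 1 = n := by show n - 1 + 1 = n; omega
      rw [this]
      have h := hkn (n - 1) (by omega) le_rfl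
      rwa [show n - 1 - 1 = n - 2 by omega] at h
    · intro i _ hi
      have hle : i.val + 1 ≤ n - 1 := by
        have h1 : i.val ≠ n - 1 := fun h => hi (Fin.ext h)
        have h2 := i.isLt; omega
      rw [lie_smul, hab (n-1) (i.val+1) (by omega) le_rfl (by omega) hle, smul_zero]
    · intro h; exact absurd (Finset.mem_univ i0) h
  have hzI : ⁅e (n - 1), x⁆ ∈ I := I.lie_mem hx
  have h0 : ⁅x, ⁅e (n - 1), x⁆⁆ = 0 := hI x hx _ hzI
  have hcalc : ⁅x, ⁅e (n - 1), x⁆⁆ = -((c * c) • e (n - 3)) := by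
    rw [hz, lie_smul]
    conv_lhs => rw [← hxsum]
    rw [mysum_lie, Finset.sum_eq_single i0]
    · rw [smul_lie]
      have h1 : i0.val + 1 = n := by show n - 1 + 1 = n; omega
      rw [h1, ← lie_skew, hkn (n - 2) (by omega) (by omega),
        show n - 2 - 1 = n - 3 by omega]
      rw [smul_neg, smul_neg, smul_smul, ← hc, mul_comm]
    · intro i _ hi
      have hle : i.val + 1 ≤ n - 1 := by
        have h1 : i.val ≠ n - 1 := fun h => hi (Fin.ext h)
        have h2 := i.isLt; omega
      rw [smul_lie, hab (i.val+1) (n-2) (by omega) hle (by omega) (by omega), smul_zero]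
    · intro h; exact absurd (Finset.mem_univ i0) h
  have hc0 : c = 0 := by
    rw [hcalc, neg_eq_zero, smul_eq_zero] at h0
    rcases h0 with h | h
    · exact mul_self_eq_zero.mp h
    · exact absurd h hne3
  rw [← hxsum]
  refine S.sum_mem fun i _ => ?_
  by_cases hi : i = i0
  · rw [hi, ← hc, hc0, zero_smul]; exact S.zero_mem
  · refine S.smul_mem _ (hgen _ (by omega) ?_)
    have : i.val ≠ n - 1 := fun h => hi (Fin.ext h)
    have := i.isLt; omega
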